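/- Let G : ℝ^d → (convex compact subsets of ℝ^d) be l-Lipschitz w.r.t. the sup-norm Hausdorff distance with l < 1. Then for every ξ ∈ ℝ^d, the set (id + G)⁻¹(ξ) := {x ∈ ℝ^d : ξ ∈ x + G(x)} is nonempty. -/

import Mathlib

open Metric Set Pointwise Filter

theorem stmt2 {d : ℕ} (G : (Fin d → ℝ) → Set (Fin d → ℝ))
    (hne : ∀ x, (G x).Nonempty) (hcv : ∀ x, Convex ℝ (G x))
    (hcp : ∀ x, IsCompact (G x))
    (l : ℝ) (hl : l < 1)
    (hlip : ∀ x y, hausdorffDist (G x) (G y) ≤ l * dist x y)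
    (ξ : Fin d → ℝ) :
    {x : Fin d → ℝ | ξ ∈ {x} + G x}.Nonempty := by
  classical
  set L : ℝ := max l 0 with hLdef
  have hL0 : 0 ≤ L := le_max_right _ _
  have hL1 : L < 1 := max_lt hl one_pos
  set H : (Fin d → ℝ) → Set (Fin d → ℝ) := fun a => (fun g => ξ - g) '' G a with hHdef
  have hiso : Isometry (fun g : Fin d → ℝ => ξ - g) :=
    Isometry.of_dist_eq fun a b => dist_sub_left ξ a b
  have Hne : ∀ a, (H a).Nonempty := fun a => (hne a).image _
  have Hcp : ∀ a, IsCompact (H a) := fun a =>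
    (hcp a).image (continuous_const.sub continuous_id)
  have Hlip : ∀ a b, hausdorffDist (H a) (H b) ≤ L * dist a b := by
    intro a b
    have := Metric.hausdorffDist_image (s := G a) (t := G b) hiso
    rw [hHdef]
    refine le_trans (le_of_eq this) (le_trans (hlip a b) ?_)
    exact mul_le_mul_of_nonneg_right (le_max_left _ _) dist_nonneg
  have Hfin : ∀ a b, EMetric.hausdorffEdist (H a) (H b) ≠ ⊤ := fun a b =>
    hausdorffEdist_ne_top_of_nonempty_of_bounded (Hne a) (Hne b)
      (Hcp a).isBounded (Hcp b).isBounded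
  -- the contraction step
  have step : ∀ a b : Fin d → ℝ, b ∈ H a → infDist b (H b) ≤ L * dist a b := by
    intro a b hb
    calc infDist b (H b) ≤ infDist b (H a) + hausdorffDist (H a) (H b) :=
          infDist_le_infDist_add_hausdorffDist (Hfin a b)
      _ = hausdorffDist (H a) (H b) := by rw [infDist_zero_of_mem hb, zero_add]
      _ ≤ L * dist a b := Hlip a b
  -- choice of nearest point
  have key : ∀ a : Fin d → ℝ, ∃ b ∈ H a, infDist a (H a) = dist a b := fun a =>
    (Hcp a).exists_infDist_eq_dist (Hne a) a
  choose nxt hnxt hdnxt using key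
  set seq : ℕ → (Fin d → ℝ) := fun n => Nat.rec (fun _ => 0)
    (fun _ a => nxt a) n with hseq
  have hseqsucc : ∀ n, seq (n + 1) = nxt (seq n) := fun n => rfl
  have hmem : ∀ n, seq (n + 1) ∈ H (seq n) := fun n => hnxt (seq n)
  have hdist : ∀ n, dist (seq n) (seq (n + 1)) = infDist (seq n) (H (seq n)) := by
    intro n; rw [hseqsucc, hdnxt]
  set C : ℝ := dist (seq 0) (seq 1) with hC
  have hgeo : ∀ n, dist (seq n) (seq (n + 1)) ≤ C * L ^ n := by
    intro n
    induction n with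
    | zero => simp [hC]
    | succ n ih =>
      have h1 : dist (seq (n + 1)) (seq (n + 2)) ≤ L * dist (seq n) (seq (n + 1)) := by
        rw [hdist (n + 1)]
        exact step (seq n) (seq (n + 1)) (hmem n)
      calc dist (seq (n + 1)) (seq (n + 2)) ≤ L * dist (seq n) (seq (n + 1)) := h1
        _ ≤ L * (C * L ^ n) := mul_le_mul_of_nonneg_left ih hL0
        _ = C * L ^ (n + 1) := by ring
  have hcauchy : CauchySeq seq := cauchySeq_of_le_geometric L C hL1 hgeo
  obtain ⟨x, hx⟩ := cauchySeq_tendsto_of_complete hcauchy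
  -- show x ∈ H x
  have hbound : ∀ n, infDist x (H x) ≤ dist x (seq (n + 1)) + L * dist (seq n) x := by
    intro n
    calc infDist x (H x) ≤ infDist (seq (n + 1)) (H x) + dist x (seq (n + 1)) :=
          infDist_le_infDist_add_dist
      _ ≤ (infDist (seq (n + 1)) (H (seq n)) + hausdorffDist (H (seq n)) (H x))
            + dist x (seq (n + 1)) := by
          exact add_le_add (infDist_le_infDist_add_hausdorffDist (Hfin _ _)) le_rfl
      _ = hausdorffDist (H (seq n)) (H x) + dist x (seq (n + 1)) := by
          rw [infDist_zero_of_mem (hmem n), zero_add]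
      _ ≤ L * dist (seq n) x + dist x (seq (n + 1)) :=
          add_le_add (Hlip _ _) le_rfl
      _ = dist x (seq (n + 1)) + L * dist (seq n) x := by ring
  have h1 : Tendsto (fun n => dist x (seq (n + 1))) atTop (nhds 0) := by
    have := (tendsto_iff_dist_tendsto_zero.1 hx).comp (tendsto_add_atTop_nat 1)
    simpa [dist_comm, Function.comp_def] using this
  have h2 : Tendsto (fun n => dist (seq n) x) atTop (nhds 0) :=
    tendsto_iff_dist_tendsto_zero.1 hx
  have hu : Tendsto (fun n => dist x (seq (n + 1)) + L * dist (seq n) x) atTop (nhds 0) := by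
    have := h1.add ((h2.const_mul L))
    simpa using this
  have hinf : infDist x (H x) ≤ 0 := ge_of_tendsto hu (Eventually.of_forall hbound)
  have hinf0 : infDist x (H x) = 0 := le_antisymm hinf infDist_nonneg
  have hxmem : x ∈ H x := ((Hcp x).isClosed.mem_iff_infDist_zero (Hne x)).2 hinf0
  obtain ⟨g, hg, hgx⟩ := hxmem
  refine ⟨x, ?_⟩
  rw [Set.mem_setOf_eq, Set.singleton_add]
  exact ⟨g, hg, by rw [← hgx]; simp⟩
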